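/- Let A ∈ ℍ^{m×n} be a quaternion matrix, let S, T ∈ ℍ^{n×m}, let Y ∈ ℍ^{m×n} be a {1}-inverse of TAS (i.e. (TAS)·Y·(TAS) = TAS), and set X = SYT. If rank(TAS) = rank(S) = rank(T), then X is the unique quaternion matrix in ℍ^{n×m} satisfying all of: XAX = X, R_r(X) = R_r(S), N_r(X) = N_r(T), R_l(X) = R_l(T), and N_l(X) = N_l(S). -/

import Mathlib

open Matrix

noncomputable section

/-- The real quaternion division ring ℍ. -/
abbrev Quat : Type := Quaternion ℝ

/-- Left range `R_l(A) = {xA : x ∈ ℍ^{1×m}} ⊆ ℍ^{1×n}`. -/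
def leftRange {m n : ℕ} (A : Matrix (Fin m) (Fin n) Quat) : Set (Fin n → Quat) :=
  {y | ∃ x : Fin m → Quat, y = Matrix.vecMul x A}

/-- Left null space `N_l(A) = {x ∈ ℍ^{1×m} : xA = 0}`. -/
def leftNull {m n : ℕ} (A : Matrix (Fin m) (Fin n) Quat) : Set (Fin m → Quat) :=
  {x | Matrix.vecMul x A = 0}

/-- Right range `R_r(A) = {Ax : x ∈ ℍ^{n×1}} ⊆ ℍ^{m×1}`. -/
def rightRange {m n : ℕ} (A : Matrix (Fin m) (Fin n) Quat) : Set (Fin m → Quat) :=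
  {y | ∃ x : Fin n → Quat, y = Matrix.mulVec A x}

/-- Right null space `N_r(A) = {x ∈ ℍ^{n×1} : Ax = 0}`. -/
def rightNull {m n : ℕ} (A : Matrix (Fin m) (Fin n) Quat) : Set (Fin n → Quat) :=
  {x | Matrix.mulVec A x = 0}

/-- The rank of a quaternion matrix: the dimension of its left range
(the left ℍ-span of its rows) as a left ℍ-vector space. -/
def qRank {m n : ℕ} (A : Matrix (Fin m) (Fin n) Quat) : ℕ :=
  Module.finrank Quat (Submodule.span Quat (Set.range (fun i : Fin m => A i)))

lemma exists_comp_of_ker_le {V W U : Type*} [AddCommGroup V] [AddCommGroup W] [AddCommGroup U]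
    [Module Quat V] [Module Quat W] [Module Quat U]
    (f : V →ₗ[Quat] W) (g : V →ₗ[Quat] U) (h : LinearMap.ker f ≤ LinearMap.ker g) :
    ∃ ψ : W →ₗ[Quat] U, ∀ x, ψ (f x) = g x := by
  obtain ⟨r, hr⟩ := (LinearMap.range f).subtype.exists_leftInverse_of_injective
    (Submodule.ker_subtype _)
  refine ⟨((LinearMap.ker f).liftQ g h) ∘ₗ
    (f.quotKerEquivRange.symm : _ →ₗ[Quat] _) ∘ₗ r, fun x => ?_⟩
  have h1 : r (f x) = ⟨f x, LinearMap.mem_range_self f x⟩ := by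
    have := congrArg (fun φ => φ ⟨f x, LinearMap.mem_range_self f x⟩) (congrArg DFunLike.coe hr)
    simpa using this
  simp [LinearMap.comp_apply, h1, LinearMap.quotKerEquivRange_symm_apply_image]

lemma vecMul_toMatrixRight' {m k : ℕ} (ψ : (Fin m → Quat) →ₗ[Quat] (Fin k → Quat))
    (y : Fin m → Quat) : y ᵥ* (LinearMap.toMatrixRight' ψ) = ψ y := by
  have := LinearMap.toMatrixRight'.symm_apply_apply ψ
  exact (congrFun (congrArg DFunLike.coe this) y)

lemma exists_left_factor {n m k : ℕ} (M : Matrix (Fin n) (Fin m) Quat)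
    (N : Matrix (Fin n) (Fin k) Quat)
    (h : ∀ x : Fin n → Quat, x ᵥ* M = 0 → x ᵥ* N = 0) :
    ∃ V : Matrix (Fin m) (Fin k) Quat, N = M * V := by
  have hker : LinearMap.ker M.vecMulLinear ≤ LinearMap.ker N.vecMulLinear := by
    intro x hx
    simp only [LinearMap.mem_ker, Matrix.vecMulLinear_apply] at *
    exact h x hx
  obtain ⟨ψ, hψ⟩ := exists_comp_of_ker_le M.vecMulLinear N.vecMulLinear hker
  refine ⟨LinearMap.toMatrixRight' ψ, Matrix.ext fun i j => ?_⟩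
  have h2 : Pi.single i 1 ᵥ* N = (Pi.single i 1 ᵥ* M) ᵥ* (LinearMap.toMatrixRight' ψ) := by
    rw [vecMul_toMatrixRight']
    exact (hψ (Pi.single i 1)).symm
  rw [Matrix.single_one_vecMul, Matrix.vecMul_vecMul, Matrix.single_one_vecMul] at h2
  exact congrFun h2 j

lemma exists_factor_of_rows_mem {n' n m : ℕ} (M : Matrix (Fin n) (Fin m) Quat)
    (N : Matrix (Fin n') (Fin m) Quat)
    (h : ∀ i, N i ∈ Submodule.span Quat (Set.range M)) :
    ∃ U : Matrix (Fin n') (Fin n) Quat, N = U * M := by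
  have h' : ∀ i, ∃ u : Fin n → Quat, N i = u ᵥ* M := by
    intro i
    have hi := h i
    change N i ∈ Submodule.span Quat (Set.range M.row) at hi
    rw [← range_vecMulLinear] at hi
    obtain ⟨u, hu⟩ := hi
    exact ⟨u, hu.symm⟩
  choose u hu using h'
  refine ⟨Matrix.of u, Matrix.ext fun i j => ?_⟩
  have := congrFun (hu i) j
  simpa [Matrix.mul_apply, Matrix.vecMul, dotProduct] using this

lemma qRank_eq_range {a b : ℕ} (M : Matrix (Fin a) (Fin b) Quat) :
    Module.finrank Quat (LinearMap.range M.vecMulLinear) = qRank M := by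
  rw [range_vecMulLinear]; rfl

/-- Theorem 3.6. -/
theorem stmt12 {m n : ℕ} (A : Matrix (Fin m) (Fin n) Quat)
    (S T : Matrix (Fin n) (Fin m) Quat)
    (Y : Matrix (Fin m) (Fin n) Quat)
    (hY : (T * A * S) * Y * (T * A * S) = T * A * S)
    (X : Matrix (Fin n) (Fin m) Quat) (hX : X = S * Y * T)
    (h1 : qRank (T * A * S) = qRank S) (h2 : qRank (T * A * S) = qRank T) :
    (X * A * X = X ∧ rightRange X = rightRange S ∧ rightNull X = rightNull T ∧
      leftRange X = leftRange T ∧ leftNull X = leftNull S) ∧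
    (∀ Z : Matrix (Fin n) (Fin m) Quat,
      Z * A * Z = Z → rightRange Z = rightRange S → rightNull Z = rightNull T →
        leftRange Z = leftRange T → leftNull Z = leftNull S → Z = X) := by
  -- introduce B = T*A*S
  obtain ⟨B, hB⟩ : ∃ B, T * A * S = B := ⟨_, rfl⟩
  rw [hB] at hY h1 h2
  -- S = U * B
  have hrle : LinearMap.range B.vecMulLinear ≤ LinearMap.range S.vecMulLinear := by
    rintro y ⟨x, rfl⟩
    refine ⟨x ᵥ* (T * A), ?_⟩
    simp only [Matrix.vecMulLinear_apply, Matrix.vecMul_vecMul]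
    rw [hB]
  have hreq : LinearMap.range B.vecMulLinear = LinearMap.range S.vecMulLinear := by
    apply Submodule.eq_of_le_of_finrank_le hrle
    rw [qRank_eq_range, qRank_eq_range, h1]
  obtain ⟨U, hS⟩ : ∃ U : Matrix (Fin n) (Fin n) Quat, S = U * B := by
    apply exists_factor_of_rows_mem
    intro i
    change S i ∈ Submodule.span Quat (Set.range B.row)
    rw [← range_vecMulLinear, hreq]
    exact ⟨Pi.single i 1, by simp [Matrix.single_one_vecMul]; rfl⟩
  -- T = B * V
  have hkle : LinearMap.ker T.vecMulLinear ≤ LinearMap.ker B.vecMulLinear := by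
    intro x hx
    simp only [LinearMap.mem_ker, Matrix.vecMulLinear_apply] at *
    rw [← hB, Matrix.mul_assoc, ← Matrix.vecMul_vecMul, hx, Matrix.zero_vecMul]
  have hkeq : LinearMap.ker T.vecMulLinear = LinearMap.ker B.vecMulLinear := by
    apply Submodule.eq_of_le_of_finrank_le hkle
    have e1 := LinearMap.finrank_range_add_finrank_ker T.vecMulLinear
    have e2 := LinearMap.finrank_range_add_finrank_ker B.vecMulLinear
    rw [qRank_eq_range] at e1 e2
    rw [← h2] at e1
    omega
  obtain ⟨V, hT⟩ : ∃ V : Matrix (Fin m) (Fin m) Quat, T = B * V := by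
    apply exists_left_factor
    intro x hx
    have : x ∈ LinearMap.ker B.vecMulLinear := by
      simpa [LinearMap.mem_ker] using hx
    rw [← hkeq] at this
    simpa [LinearMap.mem_ker] using this
  -- basic identities
  have hY2 : B * (Y * B) = B := by rw [← Matrix.mul_assoc]; exact hY
  have hBYT : B * Y * T = T := by
    rw [hT, ← Matrix.mul_assoc, Matrix.mul_assoc B Y B, hY2]
  have hTAS : T * (A * S) = B := by rw [← Matrix.mul_assoc, hB]
  have hXAS : X * (A * S) = S := by
    rw [hX, Matrix.mul_assoc (S * Y) T (A * S), hTAS, Matrix.mul_assoc S Y B]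
    conv_lhs => rw [hS]
    rw [Matrix.mul_assoc U B (Y * B), hY2, ← hS]
  have hXAS' : X * A * S = S := by rw [Matrix.mul_assoc]; exact hXAS
  have hTAX : T * A * X = T := by
    rw [hX]
    simp only [← Matrix.mul_assoc]
    rw [hB]
    exact hBYT
  have hXAX : X * A * X = X := by
    have e : X * A * X = X * A * S * (Y * T) := by
      rw [hX]; simp only [Matrix.mul_assoc]
    rw [e, hXAS', ← Matrix.mul_assoc, ← hX]
  -- range/null space equalities
  have hRR : rightRange X = rightRange S := by
    ext v; constructor
    · rintro ⟨x, rfl⟩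
      exact ⟨(Y * T) *ᵥ x, by rw [Matrix.mulVec_mulVec, ← Matrix.mul_assoc, ← hX]⟩
    · rintro ⟨x, rfl⟩
      exact ⟨(A * S) *ᵥ x, by rw [Matrix.mulVec_mulVec, hXAS]⟩
  have hRN : rightNull X = rightNull T := by
    ext v; constructor
    · intro hv
      simp only [rightNull, Set.mem_setOf_eq] at hv ⊢
      have : (T * A) *ᵥ (X *ᵥ v) = T *ᵥ v := by rw [Matrix.mulVec_mulVec, hTAX]
      rw [← this, hv, Matrix.mulVec_zero]
    · intro hv
      simp only [rightNull, Set.mem_setOf_eq] at hv ⊢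
      rw [hX, Matrix.mul_assoc, ← Matrix.mulVec_mulVec, ← Matrix.mulVec_mulVec, hv,
        Matrix.mulVec_zero, Matrix.mulVec_zero]
  have hLR : leftRange X = leftRange T := by
    ext v; constructor
    · rintro ⟨x, rfl⟩
      exact ⟨x ᵥ* (S * Y), by rw [Matrix.vecMul_vecMul, ← hX]⟩
    · rintro ⟨x, rfl⟩
      exact ⟨x ᵥ* (T * A), by rw [Matrix.vecMul_vecMul, hTAX]⟩
  have hLN : leftNull X = leftNull S := by
    ext v; constructor
    · intro hv
      simp only [leftNull, Set.mem_setOf_eq] at hv ⊢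
      have : v ᵥ* (X * (A * S)) = v ᵥ* S := by rw [hXAS]
      rw [← Matrix.vecMul_vecMul, hv, Matrix.zero_vecMul] at this
      exact this.symm
    · intro hv
      simp only [leftNull, Set.mem_setOf_eq] at hv ⊢
      rw [hX, Matrix.mul_assoc, ← Matrix.vecMul_vecMul, hv, Matrix.zero_vecMul]
  refine ⟨⟨hXAX, hRR, hRN, hLR, hLN⟩, ?_⟩
  -- uniqueness
  intro Z hZAZ hZr _ hZl _
  -- Z = Q * X
  have hrowZ : ∀ i, ∃ q : Fin n → Quat, Z i = q ᵥ* X := by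
    intro i
    have : Z i ∈ leftRange Z := ⟨Pi.single i 1, (Matrix.single_one_vecMul i Z).symm⟩
    rw [hZl, ← hLR] at this
    exact this
  choose q hq using hrowZ
  have hZQ : Z = Matrix.of q * X := by
    refine Matrix.ext fun i j => ?_
    have := congrFun (hq i) j
    simpa [Matrix.mul_apply, Matrix.vecMul, dotProduct] using this
  -- X = Z * W
  have hcolX : ∀ j, ∃ w : Fin m → Quat, X *ᵥ Pi.single j 1 = Z *ᵥ w := by
    intro j
    have : X *ᵥ Pi.single j 1 ∈ rightRange X := ⟨_, rfl⟩
    rw [hRR, ← hZr] at this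
    obtain ⟨w, hw⟩ := this
    exact ⟨w, hw⟩
  choose w hw using hcolX
  have hXW : X = Z * Matrix.of (fun k j => w j k) := by
    refine Matrix.ext fun i j => ?_
    have := congrFun (hw j) i
    simp only [Matrix.mulVec_single, mul_one] at this
    rw [Matrix.mul_apply]
    simpa [Matrix.mulVec, dotProduct] using this
  have e1 : Z * A * X = Z := by
    conv_lhs => rw [hZQ]
    simp only [Matrix.mul_assoc]
    rw [show X * (A * X) = X from by rw [← Matrix.mul_assoc]; exact hXAX, ← hZQ]
  have e2 : Z * A * X = X := by
    conv_lhs => rw [hXW]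
    rw [← Matrix.mul_assoc, hZAZ, ← hXW]
  exact e1.symm.trans e2
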